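/- Let n ≥ 2, let S ⊆ ℝ^n be a compact set such that σ_S is a finite measure, let R = sup_{s∈S}‖s‖, and let θ : ℝ^n → ℝ be continuous. Then for every x ∈ ℝ^n ∖ {0}, the map ε ↦ ∫ G_n(x − ε·s)·θ(s) dσ_S(s) is real analytic on the open interval {ε ∈ ℝ : |ε|·R < ‖x‖}. -/

import Mathlib

open MeasureTheory RealInnerProductSpace Pointwise
open Metric

/-- The measure `σ_S`: the `(n-1)`-dimensional Hausdorff measure on `ℝⁿ` restricted to `S`. -/
noncomputable def bdryMeasure (n : ℕ) (S : Set (EuclideanSpace ℝ (Fin n))) :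
    Measure (EuclideanSpace ℝ (Fin n)) := (μH[(n : ℝ) - 1]).restrict S

/-- `s_n`: the `(n-1)`-dimensional Hausdorff measure of the unit sphere of `ℝⁿ`. -/
noncomputable def sphereArea (n : ℕ) : ℝ :=
  (μH[(n : ℝ) - 1] (Metric.sphere (0 : EuclideanSpace ℝ (Fin n)) 1)).toReal

/-- The fundamental solution `G_n` of `-Δ` in `ℝⁿ`. -/
noncomputable def fundSol (n : ℕ) (x : EuclideanSpace ℝ (Fin n)) : ℝ :=
  if n = 2 then -(1 / (2 * Real.pi)) * Real.log ‖x‖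
  else (1 / (((n : ℝ) - 2) * sphereArea n)) * ‖x‖ ^ ((2 : ℝ) - (n : ℝ))

/-- The partial derivative in the `i`-th coordinate direction. -/
noncomputable def pderiv' {n : ℕ} (i : Fin n) (F : EuclideanSpace ℝ (Fin n) → ℝ) :
    EuclideanSpace ℝ (Fin n) → ℝ :=
  fun x => lineDeriv ℝ F x (EuclideanSpace.single i 1)

/-- The iterated partial derivative `D^β F` of multi-index `β`. -/
noncomputable def multiDeriv {n : ℕ} (β : Fin n → ℕ) (F : EuclideanSpace ℝ (Fin n) → ℝ) :
    EuclideanSpace ℝ (Fin n) → ℝ :=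
  (List.finRange n).foldr (fun i G => (pderiv' i)^[β i] G) F

/-- For a compact set `S` with finite surface measure and `x ≠ 0`, the map
`ε ↦ ∫_S G_n(x - ε•s) θ(s) dσ_S(s)` is real analytic on `{ε : |ε| · sup_{s∈S} ‖s‖ < ‖x‖}`. -/
lemma aux_analyticAt {n : ℕ}
    (ν : Measure (EuclideanSpace ℝ (Fin n))) (S : Set (EuclideanSpace ℝ (Fin n)))
    (hS : IsCompact S) [IsFiniteMeasure (ν.restrict S)]
    (g g' : ℂ → EuclideanSpace ℝ (Fin n) → ℂ) (ε₀ : ℝ) (η : ℝ) (hη : 0 < η)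
    (hg : ∀ z ∈ ball (ε₀ : ℂ) η, ∀ s ∈ S,
      ContinuousAt (fun p : ℂ × EuclideanSpace ℝ (Fin n) => g p.1 p.2) (z, s))
    (hg' : ∀ z ∈ ball (ε₀ : ℂ) η, ∀ s ∈ S,
      ContinuousAt (fun p : ℂ × EuclideanSpace ℝ (Fin n) => g' p.1 p.2) (z, s))
    (hd : ∀ z ∈ ball (ε₀ : ℂ) η, ∀ s ∈ S, HasDerivAt (fun w => g w s) (g' z s) z) :
    AnalyticAt ℝ (fun ε : ℝ => (∫ s, g ε s ∂(ν.restrict S)).re) ε₀ := by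
  set μ := ν.restrict S with hμ
  have hSm : MeasurableSet S := hS.isClosed.measurableSet
  have hmem : ∀ᵐ s ∂μ, s ∈ S := ae_restrict_mem hSm
  have cont : ∀ (h : ℂ → EuclideanSpace ℝ (Fin n) → ℂ),
      (∀ z ∈ ball (ε₀ : ℂ) η, ∀ s ∈ S,
        ContinuousAt (fun p : ℂ × EuclideanSpace ℝ (Fin n) => h p.1 p.2) (z, s)) →
      ∀ z ∈ ball (ε₀ : ℂ) η, ContinuousOn (fun s => h z s) S := by
    intro h hh z hz s hs
    exact ((hh z hz s hs).comp (Continuous.prodMk_right z).continuousAt).continuousWithinAt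
  have meas : ∀ z ∈ ball (ε₀ : ℂ) η, AEStronglyMeasurable (fun s => g z s) μ := fun z hz =>
    (cont g hg z hz).aestronglyMeasurable hSm
  have meas' : ∀ z ∈ ball (ε₀ : ℂ) η, AEStronglyMeasurable (fun s => g' z s) μ := fun z hz =>
    (cont g' hg' z hz).aestronglyMeasurable hSm
  have intg : ∀ z ∈ ball (ε₀ : ℂ) η, Integrable (fun s => g z s) μ := by
    intro z hz
    obtain ⟨C, hC⟩ := hS.exists_bound_of_continuousOn (cont g hg z hz)
    exact (integrable_const C).mono' (meas z hz) (hmem.mono fun s hs => hC s hs)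
  have key : ∀ z ∈ ball (ε₀ : ℂ) (η / 2),
      HasDerivAt (fun w => ∫ s, g w s ∂μ) (∫ s, g' z s ∂μ) z := by
    intro z₁ hz₁
    have hz₁' : z₁ ∈ ball (ε₀ : ℂ) η := ball_subset_ball (by linarith) hz₁
    set r := (η - dist z₁ (ε₀ : ℂ)) / 2 with hr
    have hdlt : dist z₁ (ε₀ : ℂ) < η := mem_ball.1 hz₁'
    have hrpos : 0 < r := by simp only [hr]; linarith
    have hsub : closedBall z₁ r ⊆ ball (ε₀ : ℂ) η := by
      intro w hw
      have : dist w z₁ ≤ r := mem_closedBall.1 hw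
      have := dist_triangle w z₁ (ε₀ : ℂ)
      rw [mem_ball]
      linarith
    obtain ⟨C, hC⟩ := ((isCompact_closedBall z₁ r).prod hS).exists_bound_of_continuousOn
      (fun p hp => (hg' p.1 (hsub hp.1) p.2 hp.2).continuousWithinAt)
    refine (hasDerivAt_integral_of_dominated_loc_of_deriv_le (ball_mem_nhds z₁ hrpos)
      ?_ (intg z₁ hz₁') (meas' z₁ hz₁') (bound := fun _ => C) ?_ (integrable_const C) ?_).2
    · filter_upwards [isOpen_ball.eventually_mem hz₁'] with w hw using meas w hw
    · filter_upwards [hmem] with s hs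
      intro w hw
      exact hC (w, s) ⟨ball_subset_closedBall hw, hs⟩
    · filter_upwards [hmem] with s hs
      intro w hw
      exact hd w (hsub (ball_subset_closedBall hw)) s hs
  have hF : AnalyticOnNhd ℂ (fun w => ∫ s, g w s ∂μ) (ball (ε₀ : ℂ) (η / 2)) :=
    DifferentiableOn.analyticOnNhd
      (fun z hz => ((key z hz).differentiableAt).differentiableWithinAt) isOpen_ball
  have hFa : AnalyticAt ℂ (fun w => ∫ s, g w s ∂μ) (ε₀ : ℂ) :=
    hF _ (mem_ball_self (by linarith))
  have h1 : AnalyticAt ℝ ((fun w => ∫ s, g w s ∂μ) ∘ (Complex.ofRealCLM : ℝ →L[ℝ] ℂ)) ε₀ :=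
    hFa.restrictScalars.comp (Complex.ofRealCLM.analyticAt ε₀)
  exact (Complex.reCLM.analyticAt _).comp h1

theorem stmt7 (n : ℕ) (hn : 2 ≤ n) (S : Set (EuclideanSpace ℝ (Fin n)))
    (hS : IsCompact S) (hfin : IsFiniteMeasure (bdryMeasure n S))
    (θ : EuclideanSpace ℝ (Fin n) → ℝ) (hθ : Continuous θ)
    (x : EuclideanSpace ℝ (Fin n)) (hx : x ≠ 0) :
    AnalyticOnNhd ℝ (fun ε : ℝ => ∫ s, fundSol n (x - ε • s) * θ s ∂(bdryMeasure n S))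
      {ε : ℝ | |ε| * sSup ((fun s => ‖s‖) '' S) < ‖x‖} := by
  haveI : IsFiniteMeasure ((μH[(n : ℝ) - 1]).restrict S) := hfin
  intro ε₀ hε₀
  rw [Set.mem_setOf_eq] at hε₀
  set R : ℝ := sSup ((fun s => ‖s‖) '' S) with hRdef
  have hR : ∀ s ∈ S, ‖s‖ ≤ R :=
    fun s hs => le_csSup ((hS.image continuous_norm).bddAbove) ⟨s, hs, rfl⟩
  -- the complexified quadratic
  set Q : ℂ × EuclideanSpace ℝ (Fin n) → ℂ := fun p =>
    ((‖x‖ ^ 2 : ℝ) : ℂ) - 2 * ((⟪x, p.2⟫ : ℝ) : ℂ) * p.1 + ((‖p.2‖ ^ 2 : ℝ) : ℂ) * p.1 ^ 2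
    with hQdef
  have hQc : Continuous Q := by
    apply Continuous.add
    · apply Continuous.sub continuous_const
      exact ((continuous_const.mul ((Complex.continuous_ofReal).comp
        (continuous_const.inner continuous_snd))).mul continuous_fst)
    · exact ((Complex.continuous_ofReal).comp
        ((continuous_snd.norm).pow 2)).mul (continuous_fst.pow 2)
  have hQr : ∀ (ε : ℝ) (s : EuclideanSpace ℝ (Fin n)),
      Q ((ε : ℂ), s) = ((‖x - ε • s‖ ^ 2 : ℝ) : ℂ) := by
    intro ε s
    have h1 : ‖x - ε • s‖ ^ 2 = ‖x‖ ^ 2 - 2 * (ε * ⟪x, s⟫) + ε ^ 2 * ‖s‖ ^ 2 := by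
      rw [norm_sub_sq_real, real_inner_smul_right, norm_smul]
      rw [mul_pow, Real.norm_eq_abs, sq_abs]
    simp only [hQdef, h1]
    push_cast
    ring
  -- slit plane membership at ε₀
  have h0 : ∀ s ∈ S, Q ((ε₀ : ℂ), s) ∈ Complex.slitPlane := by
    intro s hs
    rw [hQr]
    refine Or.inl ?_
    simp only [Complex.ofReal_re]
    have hlt : ‖ε₀ • s‖ < ‖x‖ := by
      rw [norm_smul, Real.norm_eq_abs]
      calc |ε₀| * ‖s‖ ≤ |ε₀| * R := by
            exact mul_le_mul_of_nonneg_left (hR s hs) (abs_nonneg _)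
        _ < ‖x‖ := hε₀
    have hne : x - ε₀ • s ≠ 0 := by
      intro h
      rw [sub_eq_zero] at h
      rw [h] at hlt
      exact lt_irrefl _ hlt
    exact pow_pos (norm_pos_iff.mpr hne) 2
  -- tube lemma
  obtain ⟨u, v, hu, _, hεu, hSv, huv⟩ := generalized_tube_lemma isCompact_singleton hS
    (Complex.isOpen_slitPlane.preimage hQc)
    (by
      rintro ⟨z, s⟩ ⟨hz, hs⟩
      simp only [Set.mem_singleton_iff] at hz
      subst hz
      exact h0 s hs)
  obtain ⟨η, hη, hball⟩ := Metric.isOpen_iff.1 hu (ε₀ : ℂ) (hεu rfl)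
  have hslit : ∀ z ∈ ball (ε₀ : ℂ) η, ∀ s ∈ S, Q (z, s) ∈ Complex.slitPlane :=
    fun z hz s hs => huv ⟨hball hz, hSv hs⟩
  -- derivative of Q
  set Q' : ℂ × EuclideanSpace ℝ (Fin n) → ℂ := fun p =>
    -(2 * ((⟪x, p.2⟫ : ℝ) : ℂ)) + ((‖p.2‖ ^ 2 : ℝ) : ℂ) * (2 * p.1) with hQ'def
  have hQ'c : Continuous Q' := by
    apply Continuous.add
    · exact (continuous_const.mul ((Complex.continuous_ofReal).comp
        (continuous_const.inner continuous_snd))).neg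
    · exact ((Complex.continuous_ofReal).comp ((continuous_snd.norm).pow 2)).mul
        (continuous_const.mul continuous_fst)
  have hQd : ∀ (s : EuclideanSpace ℝ (Fin n)) (z : ℂ),
      HasDerivAt (fun w => Q (w, s)) (Q' (z, s)) z := by
    intro s z
    have h1 : HasDerivAt (fun w : ℂ =>
        ((‖x‖ ^ 2 : ℝ) : ℂ) - 2 * ((⟪x, s⟫ : ℝ) : ℂ) * w + ((‖s‖ ^ 2 : ℝ) : ℂ) * w ^ 2)
        (-(2 * ((⟪x, s⟫ : ℝ) : ℂ)) + ((‖s‖ ^ 2 : ℝ) : ℂ) * (2 * z)) z := by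
      have ha := (hasDerivAt_id z).const_mul (2 * ((⟪x, s⟫ : ℝ) : ℂ))
      have hb := (hasDerivAt_pow 2 z).const_mul ((‖s‖ ^ 2 : ℝ) : ℂ)
      have h := ((hasDerivAt_const z ((‖x‖ ^ 2 : ℝ) : ℂ)).sub ha).add hb
      exact h.congr_deriv (by simp only [Nat.cast_ofNat, pow_one, mul_one, zero_sub]; ring)
    exact h1
  -- a.e. membership
  have hmem : ∀ᵐ s ∂(bdryMeasure n S), s ∈ S := ae_restrict_mem hS.isClosed.measurableSet
  by_cases h2 : n = 2
  · -- n = 2 : logarithmic case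
    subst h2
    set c : ℂ := -(1 / (4 * Real.pi)) with hcdef
    set g : ℂ → EuclideanSpace ℝ (Fin 2) → ℂ :=
      fun z s => c * Complex.log (Q (z, s)) * (θ s : ℂ) with hgdef
    set g' : ℂ → EuclideanSpace ℝ (Fin 2) → ℂ :=
      fun z s => c * (Q' (z, s) / Q (z, s)) * (θ s : ℂ) with hg'def
    have hga := aux_analyticAt μH[(2 : ℝ) - 1] S hS g g' ε₀ η hη
      (by
        intro z hz s hs
        exact (continuousAt_const.mul ((continuousAt_clog (hslit z hz s hs)).comp
          hQc.continuousAt)).mul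
          ((Complex.continuous_ofReal.comp (hθ.comp continuous_snd)).continuousAt))
      (by
        intro z hz s hs
        exact (continuousAt_const.mul (hQ'c.continuousAt.div hQc.continuousAt
          (Complex.slitPlane_ne_zero (hslit z hz s hs)))).mul
          ((Complex.continuous_ofReal.comp (hθ.comp continuous_snd)).continuousAt))
      (by
        intro z hz s hs
        exact (((hQd s z).clog (hslit z hz s hs)).const_mul c).mul_const (θ s : ℂ))
    refine hga.congr ?_
    have hev : ∀ᶠ ε : ℝ in nhds ε₀, (ε : ℂ) ∈ ball (ε₀ : ℂ) η := by
      have : Continuous (fun ε : ℝ => (ε : ℂ)) := Complex.continuous_ofReal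
      exact this.continuousAt.eventually_mem (isOpen_ball.mem_nhds (mem_ball_self hη))
    filter_upwards [hev] with ε hε
    have hptwise : ∀ s ∈ S, g (ε : ℂ) s = ((fundSol 2 (x - ε • s) * θ s : ℝ) : ℂ) := by
      intro s hs
      have hQpos : 0 < ‖x - ε • s‖ ^ 2 := by
        have := hslit _ hε s hs
        rw [hQr] at this
        rcases this with h | h
        · rwa [Complex.ofReal_re] at h
        · exact absurd (Complex.ofReal_im _) h
      have hlog : Complex.log (Q ((ε : ℂ), s)) = ((Real.log (‖x - ε • s‖ ^ 2) : ℝ) : ℂ) := by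
        rw [hQr]
        exact (Complex.ofReal_log hQpos.le).symm
      rw [hgdef]
      simp only [hlog, hcdef]
      rw [Real.log_pow]
      have : fundSol 2 (x - ε • s) = -(1 / (2 * Real.pi)) * Real.log ‖x - ε • s‖ := by
        simp [fundSol]
      rw [this]
      push_cast
      ring
    have : ∫ s, g (ε : ℂ) s ∂(bdryMeasure 2 S)
        = ((∫ s, fundSol 2 (x - ε • s) * θ s ∂(bdryMeasure 2 S) : ℝ) : ℂ) := by
      rw [integral_congr_ae (hmem.mono fun s hs => hptwise s hs)]
      exact integral_ofReal
    show (∫ s, g (ε : ℂ) s ∂((μH[(2 : ℝ) - 1]).restrict S)).re = _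
    rw [show ((μH[(2 : ℝ) - 1]).restrict S) = bdryMeasure 2 S from rfl, this, Complex.ofReal_re]
  · -- n ≥ 3 : power case
    set wr : ℝ := ((2 : ℝ) - n) / 2 with hwrdef
    set c : ℝ := 1 / (((n : ℝ) - 2) * sphereArea n) with hcdef
    set g : ℂ → EuclideanSpace ℝ (Fin n) → ℂ :=
      fun z s => (c : ℂ) * Q (z, s) ^ ((wr : ℝ) : ℂ) * (θ s : ℂ) with hgdef
    set g' : ℂ → EuclideanSpace ℝ (Fin n) → ℂ :=
      fun z s => (c : ℂ) * (((wr : ℝ) : ℂ) * Q (z, s) ^ (((wr : ℝ) : ℂ) - 1) * Q' (z, s)) *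
        (θ s : ℂ) with hg'def
    have hga := aux_analyticAt μH[(n : ℝ) - 1] S hS g g' ε₀ η hη
      (by
        intro z hz s hs
        exact (continuousAt_const.mul ((continuousAt_cpow_const (hslit z hz s hs)).comp
          hQc.continuousAt)).mul
          ((Complex.continuous_ofReal.comp (hθ.comp continuous_snd)).continuousAt))
      (by
        intro z hz s hs
        exact (continuousAt_const.mul ((continuousAt_const.mul
          ((continuousAt_cpow_const (hslit z hz s hs)).comp
            hQc.continuousAt)).mul hQ'c.continuousAt)).mul
          ((Complex.continuous_ofReal.comp (hθ.comp continuous_snd)).continuousAt))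
      (by
        intro z hz s hs
        exact (((hQd s z).cpow_const (hslit z hz s hs)).const_mul (c : ℂ)).mul_const (θ s : ℂ))
    refine hga.congr ?_
    have hev : ∀ᶠ ε : ℝ in nhds ε₀, (ε : ℂ) ∈ ball (ε₀ : ℂ) η :=
      Complex.continuous_ofReal.continuousAt.eventually_mem
        (isOpen_ball.mem_nhds (mem_ball_self hη))
    filter_upwards [hev] with ε hε
    have hptwise : ∀ s ∈ S, g (ε : ℂ) s = ((fundSol n (x - ε • s) * θ s : ℝ) : ℂ) := by
      intro s hs
      have hQpos : 0 < ‖x - ε • s‖ ^ 2 := by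
        have := hslit _ hε s hs
        rw [hQr] at this
        rcases this with h | h
        · rwa [Complex.ofReal_re] at h
        · exact absurd (Complex.ofReal_im _) h
      have hnpos : (0 : ℝ) < ‖x - ε • s‖ := by
        nlinarith [norm_nonneg (x - ε • s), hQpos]
      have hcp : Q ((ε : ℂ), s) ^ ((wr : ℝ) : ℂ)
          = (((‖x - ε • s‖ ^ 2 : ℝ) ^ wr : ℝ) : ℂ) := by
        rw [hQr]
        exact (Complex.ofReal_cpow hQpos.le wr).symm
      have hrp : (‖x - ε • s‖ ^ 2 : ℝ) ^ wr = ‖x - ε • s‖ ^ ((2 : ℝ) - n) := by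
        rw [← Real.rpow_natCast ‖x - ε • s‖ 2, ← Real.rpow_mul (norm_nonneg _)]
        norm_num [hwrdef]
        ring_nf
      have : fundSol n (x - ε • s)
          = c * ‖x - ε • s‖ ^ ((2 : ℝ) - n) := by
        simp [fundSol, h2, hcdef]
      rw [hgdef]
      simp only [hcp, hrp, this]
      push_cast
      ring
    have : ∫ s, g (ε : ℂ) s ∂(bdryMeasure n S)
        = ((∫ s, fundSol n (x - ε • s) * θ s ∂(bdryMeasure n S) : ℝ) : ℂ) := by
      rw [integral_congr_ae (hmem.mono fun s hs => hptwise s hs)]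
      exact integral_ofReal
    show (∫ s, g (ε : ℂ) s ∂((μH[(n : ℝ) - 1]).restrict S)).re = _
    rw [show ((μH[(n : ℝ) - 1]).restrict S) = bdryMeasure n S from rfl, this, Complex.ofReal_re]
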